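/- For real numbers λ₁,λ₂,λ₃, the 9×9 matrix I₃ ⊗ I₃ + (3/2)·(λ₁·J₁⊗J₁ − λ₂·J₂⊗J₂ + λ₃·J₃⊗J₃) is positive semidefinite if and only if 4 − 9(λ₁² + λ₂² + λ₃²) + 27·λ₁λ₂λ₃ ≥ 0 and |λᵢ| ≤ 2/3 for each i ∈ {1,2,3}. -/

import Mathlib

open Matrix Kronecker
open scoped ComplexOrder

/-- The spin-1 angular momentum matrix J₁. -/
noncomputable def spinOneJ1 : Matrix (Fin 3) (Fin 3) ℂ :=
  ((1 / Real.sqrt 2 : ℝ) : ℂ) • !![0, 1, 0; 1, 0, 1; 0, 1, 0]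

/-- The spin-1 angular momentum matrix J₂. -/
noncomputable def spinOneJ2 : Matrix (Fin 3) (Fin 3) ℂ :=
  ((1 / Real.sqrt 2 : ℝ) : ℂ) • !![0, -Complex.I, 0; Complex.I, 0, -Complex.I; 0, Complex.I, 0]

/-- The spin-1 angular momentum matrix J₃. -/
def spinOneJ3 : Matrix (Fin 3) (Fin 3) ℂ := !![1, 0, 0; 0, 0, 0; 0, 0, -1]

namespace QutritAux

def R1 : Matrix (Fin 3) (Fin 3) ℂ := !![0, 1, 0; 1, 0, 1; 0, 1, 0]
def R2 : Matrix (Fin 3) (Fin 3) ℂ := !![0, -1, 0; 1, 0, -1; 0, 1, 0]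
def R3 : Matrix (Fin 3) (Fin 3) ℂ := !![1, 0, 0; 0, 0, 0; 0, 0, -1]

lemma half_aux : (((1 / Real.sqrt 2 : ℝ) : ℂ)) * (((1 / Real.sqrt 2 : ℝ) : ℂ)) = 1 / 2 := by
  rw [← Complex.ofReal_mul]
  rw [show (1 / Real.sqrt 2) * (1 / Real.sqrt 2) = 1 / 2 by
    rw [div_mul_div_comm, Real.mul_self_sqrt (by norm_num)]; norm_num]
  norm_num

lemma J1_kron : spinOneJ1 ⊗ₖ spinOneJ1 = ((1 : ℂ) / 2) • (R1 ⊗ₖ R1) := by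
  rw [spinOneJ1, smul_kronecker, kronecker_smul, smul_smul, half_aux, R1]

lemma J2_eq : spinOneJ2 = ((1 / Real.sqrt 2 : ℝ) : ℂ) • (Complex.I • R2) := by
  rw [spinOneJ2, R2]
  congr 1
  ext i j
  fin_cases i <;> fin_cases j <;> simp

lemma J2_kron : spinOneJ2 ⊗ₖ spinOneJ2 = (-(1 : ℂ) / 2) • (R2 ⊗ₖ R2) := by
  rw [J2_eq, smul_kronecker, kronecker_smul, smul_smul, smul_kronecker, kronecker_smul,
    smul_smul, smul_smul]
  congr 1
  rw [show (↑(1 / Real.sqrt 2) * ↑(1 / Real.sqrt 2) * Complex.I * Complex.I : ℂ)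
      = (↑(1 / Real.sqrt 2) * ↑(1 / Real.sqrt 2)) * (Complex.I * Complex.I) by ring,
    half_aux, Complex.I_mul_I]
  norm_num

lemma J3_eq : spinOneJ3 = R3 := rfl

end QutritAux

namespace QutritAux

noncomputable def Mmat (l1 l2 l3 : ℝ) : Matrix (Fin 3 × Fin 3) (Fin 3 × Fin 3) ℂ :=
  (1 : Matrix (Fin 3) (Fin 3) ℂ) ⊗ₖ (1 : Matrix (Fin 3) (Fin 3) ℂ) +
    ((3 / 2 : ℝ) : ℂ) • ((l1 : ℂ) • (spinOneJ1 ⊗ₖ spinOneJ1) -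
      (l2 : ℂ) • (spinOneJ2 ⊗ₖ spinOneJ2) +
      (l3 : ℂ) • (spinOneJ3 ⊗ₖ spinOneJ3))

set_option maxHeartbeats 2000000 in
lemma form_eval (l1 l2 l3 : ℝ) (x : Fin 3 × Fin 3 → ℂ) :
    star x ⬝ᵥ (Mmat l1 l2 l3) *ᵥ x =
      ((1 + 3/2*l3 : ℝ) : ℂ) * ((starRingEnd ℂ) (x (0,0)) * x (0,0) +
          (starRingEnd ℂ) (x (2,2)) * x (2,2)) +
      ((1 - 3/2*l3 : ℝ) : ℂ) * ((starRingEnd ℂ) (x (0,2)) * x (0,2) +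
          (starRingEnd ℂ) (x (2,0)) * x (2,0)) +
      ((starRingEnd ℂ) (x (0,1)) * x (0,1) + (starRingEnd ℂ) (x (1,0)) * x (1,0) +
          (starRingEnd ℂ) (x (1,1)) * x (1,1) + (starRingEnd ℂ) (x (1,2)) * x (1,2) +
          (starRingEnd ℂ) (x (2,1)) * x (2,1)) +
      ((3/4*(l1+l2) : ℝ) : ℂ) * ((starRingEnd ℂ) (x (0,0)) * x (1,1) +
          (starRingEnd ℂ) (x (1,1)) * x (0,0) + (starRingEnd ℂ) (x (1,1)) * x (2,2) +
          (starRingEnd ℂ) (x (2,2)) * x (1,1) + (starRingEnd ℂ) (x (0,1)) * x (1,2) +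
          (starRingEnd ℂ) (x (1,2)) * x (0,1) + (starRingEnd ℂ) (x (1,0)) * x (2,1) +
          (starRingEnd ℂ) (x (2,1)) * x (1,0)) +
      ((3/4*(l1-l2) : ℝ) : ℂ) * ((starRingEnd ℂ) (x (0,2)) * x (1,1) +
          (starRingEnd ℂ) (x (1,1)) * x (0,2) + (starRingEnd ℂ) (x (1,1)) * x (2,0) +
          (starRingEnd ℂ) (x (2,0)) * x (1,1) + (starRingEnd ℂ) (x (0,1)) * x (1,0) +
          (starRingEnd ℂ) (x (1,0)) * x (0,1) + (starRingEnd ℂ) (x (1,2)) * x (2,1) +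
          (starRingEnd ℂ) (x (2,1)) * x (1,2)) := by
  rw [Mmat, J1_kron, J2_kron, J3_eq, Matrix.one_fin_three, R1, R2, R3]
  simp only [dotProduct, mulVec, Fintype.sum_prod_type, Fin.sum_univ_three,
    Matrix.add_apply, Matrix.smul_apply, Matrix.sub_apply, Matrix.kroneckerMap_apply,
    Pi.star_apply, smul_eq_mul,
    Matrix.of_apply, Matrix.cons_val', Matrix.empty_val', Matrix.cons_val_fin_one,
    Matrix.cons_val_zero, Matrix.cons_val_one, Matrix.cons_val_two,
    Matrix.head_cons, Matrix.tail_cons, Matrix.head_fin_const, Matrix.vecHead, Matrix.vecTail,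
    mul_zero, zero_mul, add_zero, zero_add, mul_one, one_mul, neg_mul, mul_neg, neg_neg,
    Function.comp_apply, Fin.succ_zero_eq_one, Fin.succ_one_eq_two, Complex.star_def]
  push_cast
  ring


set_option maxHeartbeats 1600000

lemma pos_of (s t p : ℝ) (hp : 0 ≤ p) (hst : p ≤ s * t) (hsum : 0 ≤ s + t) : 0 ≤ s := by
  by_contra h
  push_neg at h
  nlinarith [mul_nonneg hsum (le_of_lt (neg_pos.mpr h)), mul_pos (neg_pos.mpr h) (neg_pos.mpr h)]

lemma quad_nn (s t v y z : ℝ) (hs : 0 ≤ s) (ht : 0 ≤ t) (h : v ^ 2 ≤ s * t) :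
    0 ≤ s * y ^ 2 + t * z ^ 2 - 2 * v * (y * z) := by
  rcases eq_or_lt_of_le hs with h0 | h0
  · have hv : v = 0 := by nlinarith
    rw [hv, ← h0]
    nlinarith [sq_nonneg z]
  · nlinarith [sq_nonneg (s * y - v * z), mul_nonneg (sub_nonneg.mpr h) (sq_nonneg z)]

lemma schur (S T V : ℝ) (h : ∀ v w : ℝ, 0 ≤ S * v ^ 2 + T * w ^ 2 - 2 * V * (v * w)) :
    0 ≤ S * T - V ^ 2 := by
  have hS : 0 ≤ S := by have := h 1 0; nlinarith
  have hT : 0 ≤ T := by have := h 0 1; nlinarith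
  rcases eq_or_lt_of_le (by linarith : (0 : ℝ) ≤ S + T) with h0 | h0
  · have hV := h V 1
    nlinarith [hV, hS, hT]
  · have hA := h V S
    have hB := h T V
    nlinarith [hA, hB, hS, hT, h0]

lemma extract (l1 l2 l3 : ℝ)
    (h : ∀ u v w : ℝ, 0 ≤ u ^ 2 + (2 + 3 * l3) * v ^ 2 + (2 - 3 * l3) * w ^ 2 +
      3 * (l1 + l2) * (u * v) + 3 * (l1 - l2) * (u * w)) :
    0 ≤ 4 - 9 * (l1 ^ 2 + l2 ^ 2 + l3 ^ 2) + 27 * (l1 * l2 * l3) := by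
  have h2 : ∀ v w : ℝ, 0 ≤ (2 + 3 * l3 - 9 / 4 * (l1 + l2) ^ 2) * v ^ 2 +
      (2 - 3 * l3 - 9 / 4 * (l1 - l2) ^ 2) * w ^ 2 -
      2 * (9 / 4 * (l1 + l2) * (l1 - l2)) * (v * w) := by
    intro v w
    have h3 := h (-(3 / 2 * (l1 + l2) * v) - 3 / 2 * (l1 - l2) * w) v w
    have hid : (-(3 / 2 * (l1 + l2) * v) - 3 / 2 * (l1 - l2) * w) ^ 2 +
        (2 + 3 * l3) * v ^ 2 + (2 - 3 * l3) * w ^ 2 +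
        3 * (l1 + l2) * ((-(3 / 2 * (l1 + l2) * v) - 3 / 2 * (l1 - l2) * w) * v) +
        3 * (l1 - l2) * ((-(3 / 2 * (l1 + l2) * v) - 3 / 2 * (l1 - l2) * w) * w) =
        (2 + 3 * l3 - 9 / 4 * (l1 + l2) ^ 2) * v ^ 2 +
        (2 - 3 * l3 - 9 / 4 * (l1 - l2) ^ 2) * w ^ 2 -
        2 * (9 / 4 * (l1 + l2) * (l1 - l2)) * (v * w) := by ring
    linarith [h3, hid]
  have h4 := schur _ _ _ h2
  have hid : (2 + 3 * l3 - 9 / 4 * (l1 + l2) ^ 2) * (2 - 3 * l3 - 9 / 4 * (l1 - l2) ^ 2) -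
      (9 / 4 * (l1 + l2) * (l1 - l2)) ^ 2 =
      4 - 9 * (l1 ^ 2 + l2 ^ 2 + l3 ^ 2) + 27 * (l1 * l2 * l3) := by ring
  linarith [h4, hid]

lemma key (l1 l2 l3 : ℝ) (h4 : 0 ≤ 4 - 9 * (l1 ^ 2 + l2 ^ 2 + l3 ^ 2) + 27 * (l1 * l2 * l3))
    (h1 : |l1| ≤ 2 / 3) (h2 : |l2| ≤ 2 / 3) (h3 : |l3| ≤ 2 / 3)
    (y00 y01 y02 y10 y11 y12 y20 y21 y22 : ℝ) :
    0 ≤ (1 + 3 / 2 * l3) * (y00 ^ 2 + y22 ^ 2) + (1 - 3 / 2 * l3) * (y02 ^ 2 + y20 ^ 2) +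
      (y01 ^ 2 + y10 ^ 2 + y11 ^ 2 + y12 ^ 2 + y21 ^ 2) +
      3 / 2 * (l1 + l2) * (y00 * y11 + y11 * y22 + y01 * y12 + y10 * y21) +
      3 / 2 * (l1 - l2) * (y02 * y11 + y11 * y20 + y01 * y10 + y12 * y21) := by
  obtain ⟨h1a, h1b⟩ := abs_le.mp h1
  obtain ⟨h2a, h2b⟩ := abs_le.mp h2
  obtain ⟨h3a, h3b⟩ := abs_le.mp h3
  have hst : (3 / 4 * (l1 + l2) * (3 / 4 * (l1 - l2))) ^ 2 ≤
      ((1 + 3 / 2 * l3) / 2 - (3 / 4 * (l1 + l2)) ^ 2) *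
        ((1 - 3 / 2 * l3) / 2 - (3 / 4 * (l1 - l2)) ^ 2) := by
    have hid : ((1 + 3 / 2 * l3) / 2 - (3 / 4 * (l1 + l2)) ^ 2) *
        ((1 - 3 / 2 * l3) / 2 - (3 / 4 * (l1 - l2)) ^ 2) -
        (3 / 4 * (l1 + l2) * (3 / 4 * (l1 - l2))) ^ 2 =
        (4 - 9 * (l1 ^ 2 + l2 ^ 2 + l3 ^ 2) + 27 * (l1 * l2 * l3)) / 16 := by ring
    linarith [h4, hid]
  have hsum : 0 ≤ ((1 + 3 / 2 * l3) / 2 - (3 / 4 * (l1 + l2)) ^ 2) +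
      ((1 - 3 / 2 * l3) / 2 - (3 / 4 * (l1 - l2)) ^ 2) := by
    nlinarith [mul_nonneg (by linarith : (0:ℝ) ≤ 2 / 3 - l1) (by linarith : (0:ℝ) ≤ 2 / 3 + l1),
      mul_nonneg (by linarith : (0:ℝ) ≤ 2 / 3 - l2) (by linarith : (0:ℝ) ≤ 2 / 3 + l2)]
  have hs : 0 ≤ (1 + 3 / 2 * l3) / 2 - (3 / 4 * (l1 + l2)) ^ 2 :=
    pos_of _ _ _ (sq_nonneg _) hst hsum
  have ht : 0 ≤ (1 - 3 / 2 * l3) / 2 - (3 / 4 * (l1 - l2)) ^ 2 :=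
    pos_of _ _ _ (sq_nonneg _) (by rw [mul_comm]; exact hst) (by linarith)
  have hq := quad_nn _ _ (3 / 4 * (l1 + l2) * (3 / 4 * (l1 - l2))) (y00 + y22) (y02 + y20)
    hs ht hst
  have c1 : 0 ≤ (1 + 3 / 2 * l1) * (y01 + y12 + y21 + y10) ^ 2 :=
    mul_nonneg (by linarith) (sq_nonneg _)
  have c2 : 0 ≤ (1 - 3 / 2 * l1) * (y01 - y12 + y21 - y10) ^ 2 :=
    mul_nonneg (by linarith) (sq_nonneg _)
  have c3 : 0 ≤ (1 + 3 / 2 * l2) * (y01 + y12 - y21 - y10) ^ 2 :=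
    mul_nonneg (by linarith) (sq_nonneg _)
  have c4 : 0 ≤ (1 - 3 / 2 * l2) * (y01 - y12 - y21 + y10) ^ 2 :=
    mul_nonneg (by linarith) (sq_nonneg _)
  have c5 : 0 ≤ (1 + 3 / 2 * l3) * (y00 - y22) ^ 2 := mul_nonneg (by linarith) (sq_nonneg _)
  have c6 : 0 ≤ (1 - 3 / 2 * l3) * (y02 - y20) ^ 2 := mul_nonneg (by linarith) (sq_nonneg _)
  have c7 : 0 ≤ (y11 + 3 / 4 * (l1 + l2) * (y00 + y22) + 3 / 4 * (l1 - l2) * (y02 + y20)) ^ 2 :=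
    sq_nonneg _
  linarith [hq, c1, c2, c3, c4, c5, c6, c7]


lemma kron_conjT (A B : Matrix (Fin 3) (Fin 3) ℂ) : (A ⊗ₖ B)ᴴ = Aᴴ ⊗ₖ Bᴴ := by
  ext p q
  simp [Matrix.conjTranspose_apply, Matrix.kroneckerMap_apply, star_mul']

lemma R1_herm : R1ᴴ = R1 := by
  ext i j; fin_cases i <;> fin_cases j <;> simp [R1]

lemma R2_skew : R2ᴴ = -R2 := by
  ext i j; fin_cases i <;> fin_cases j <;> simp [R2]

lemma R3_herm : spinOneJ3ᴴ = spinOneJ3 := by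
  ext i j; fin_cases i <;> fin_cases j <;> simp [spinOneJ3, Matrix.vecHead, Matrix.vecTail]

lemma herm (l1 l2 l3 : ℝ) : (Mmat l1 l2 l3).IsHermitian := by
  have hR2 : (R2 ⊗ₖ R2)ᴴ = R2 ⊗ₖ R2 := by
    rw [kron_conjT, R2_skew]
    rw [show (-R2) = (-1 : ℂ) • R2 by simp, smul_kronecker, kronecker_smul, smul_smul]
    norm_num
  have hR1 : (R1 ⊗ₖ R1)ᴴ = R1 ⊗ₖ R1 := by rw [kron_conjT, R1_herm]
  have hR3 : (spinOneJ3 ⊗ₖ spinOneJ3)ᴴ = spinOneJ3 ⊗ₖ spinOneJ3 := by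
    rw [kron_conjT, R3_herm]
  have h1 : ((1 : Matrix (Fin 3) (Fin 3) ℂ) ⊗ₖ (1 : Matrix (Fin 3) (Fin 3) ℂ))ᴴ =
      (1 : Matrix (Fin 3) (Fin 3) ℂ) ⊗ₖ (1 : Matrix (Fin 3) (Fin 3) ℂ) := by
    rw [kron_conjT, Matrix.conjTranspose_one]
  show _ᴴ = _
  rw [Mmat, J1_kron, J2_kron]
  simp only [Matrix.conjTranspose_add, Matrix.conjTranspose_sub, Matrix.conjTranspose_smul,
    h1, hR1, hR2, hR3, Complex.star_def, map_div₀, map_ofNat, _root_.map_one, map_neg,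
    Complex.conj_ofReal]

lemma ofReal_nonneg' {r : ℝ} (z : ℂ) (hz : 0 ≤ z) (h : z = (r : ℂ)) : 0 ≤ r :=
  Complex.zero_le_real.mp (h ▸ hz)

end QutritAux

open QutritAux in
theorem qutrit_choi_posSemidef_iff (l1 l2 l3 : ℝ) :
    ((1 : Matrix (Fin 3) (Fin 3) ℂ) ⊗ₖ (1 : Matrix (Fin 3) (Fin 3) ℂ) +
      ((3 / 2 : ℝ) : ℂ) • ((l1 : ℂ) • (spinOneJ1 ⊗ₖ spinOneJ1) -
        (l2 : ℂ) • (spinOneJ2 ⊗ₖ spinOneJ2) +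
        (l3 : ℂ) • (spinOneJ3 ⊗ₖ spinOneJ3))).PosSemidef ↔
    (4 - 9 * (l1 ^ 2 + l2 ^ 2 + l3 ^ 2) + 27 * (l1 * l2 * l3) ≥ 0 ∧
      |l1| ≤ 2 / 3 ∧ |l2| ≤ 2 / 3 ∧ |l3| ≤ 2 / 3) := by
  show (Mmat l1 l2 l3).PosSemidef ↔ _
  rw [Matrix.posSemidef_iff_dotProduct_mulVec]
  constructor
  · rintro ⟨hherm, hpos⟩
    have odd1 : (0:ℝ) ≤ 4 + 6 * l1 := by
      have h := hpos (fun p => ![![(0:ℂ),1,0], ![1,0,1], ![0,1,0]] p.1 p.2)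
      rw [form_eval] at h
      exact ofReal_nonneg' _ h (by push_cast; simp; ring)
    have odd2 : (0:ℝ) ≤ 4 - 6 * l1 := by
      have h := hpos (fun p => ![![(0:ℂ),1,0], ![-1,0,-1], ![0,1,0]] p.1 p.2)
      rw [form_eval] at h
      exact ofReal_nonneg' _ h (by push_cast; simp; ring)
    have odd3 : (0:ℝ) ≤ 4 + 6 * l2 := by
      have h := hpos (fun p => ![![(0:ℂ),1,0], ![-1,0,1], ![0,-1,0]] p.1 p.2)
      rw [form_eval] at h
      exact ofReal_nonneg' _ h (by push_cast; simp; ring)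
    have odd4 : (0:ℝ) ≤ 4 - 6 * l2 := by
      have h := hpos (fun p => ![![(0:ℂ),1,0], ![1,0,-1], ![0,-1,0]] p.1 p.2)
      rw [form_eval] at h
      exact ofReal_nonneg' _ h (by push_cast; simp; ring)
    have d1 : (0:ℝ) ≤ 1 + 3/2 * l3 := by
      have h := hpos (fun p => ![![(1:ℂ),0,0], ![0,0,0], ![0,0,0]] p.1 p.2)
      rw [form_eval] at h
      exact ofReal_nonneg' _ h (by push_cast; simp [Matrix.vecHead, Matrix.vecTail])
    have d2 : (0:ℝ) ≤ 1 - 3/2 * l3 := by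
      have h := hpos (fun p => ![![(0:ℂ),0,1], ![0,0,0], ![0,0,0]] p.1 p.2)
      rw [form_eval] at h
      exact ofReal_nonneg' _ h (by push_cast; simp [Matrix.vecHead, Matrix.vecTail])
    have hq : ∀ u v w : ℝ, 0 ≤ u ^ 2 + (2 + 3 * l3) * v ^ 2 + (2 - 3 * l3) * w ^ 2 +
        3 * (l1 + l2) * (u * v) + 3 * (l1 - l2) * (u * w) := by
      intro u v w
      have h := hpos (fun p => ![![(v:ℂ),0,(w:ℂ)], ![0,(u:ℂ),0], ![(w:ℂ),0,(v:ℂ)]] p.1 p.2)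
      rw [form_eval] at h
      exact ofReal_nonneg' _ h (by push_cast; simp [Complex.conj_ofReal]; ring)
    refine ⟨by linarith [extract l1 l2 l3 hq], abs_le.mpr ⟨by linarith, by linarith⟩,
      abs_le.mpr ⟨by linarith, by linarith⟩, abs_le.mpr ⟨by linarith, by linarith⟩⟩
  · rintro ⟨h4, h1, h2, h3⟩
    refine ⟨herm l1 l2 l3, fun x => ?_⟩
    rw [form_eval, Complex.le_def]
    constructor
    · simp only [Complex.zero_re, Complex.add_re, Complex.mul_re, Complex.add_im, Complex.mul_im,
        Complex.ofReal_re, Complex.ofReal_im, Complex.conj_re, Complex.conj_im,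
        zero_mul, mul_zero, zero_sub, sub_zero, zero_add, add_zero, neg_mul, mul_neg, neg_neg]
      have K1 := key l1 l2 l3 (by linarith) h1 h2 h3 (x (0,0)).re (x (0,1)).re (x (0,2)).re
        (x (1,0)).re (x (1,1)).re (x (1,2)).re (x (2,0)).re (x (2,1)).re (x (2,2)).re
      have K2 := key l1 l2 l3 (by linarith) h1 h2 h3 (x (0,0)).im (x (0,1)).im (x (0,2)).im
        (x (1,0)).im (x (1,1)).im (x (1,2)).im (x (2,0)).im (x (2,1)).im (x (2,2)).im
      linarith [K1, K2]
    · simp only [Complex.zero_im, Complex.add_re, Complex.mul_re, Complex.add_im, Complex.mul_im,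
        Complex.ofReal_re, Complex.ofReal_im, Complex.conj_re, Complex.conj_im,
        zero_mul, mul_zero, zero_sub, sub_zero, zero_add, add_zero, neg_mul, mul_neg, neg_neg]
      ring
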